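/- From action models to arrow updates: given an action model E = (𝖠,→,pre), define the arrow update model U(E) with the same domain 𝖠 and arrows (e, pre(e))→_a(e', pre(e')) whenever (e,e') ∈ →_a. Then for every pointed model (M,s) with M,s ⊨ pre(e), the updated models (M⊗E,(s,e)) and (M*U(E),(s,e)) are bisimilar. Hence ⊨ [E,e]φ ↔ (pre(e) → [U(E),e]φ). -/

import Mathlib

namespace AAUML

/-- Formulas of arbitrary arrow update model logic over atoms `P` and agents `A`.
An arrow update model is encoded as a finite list of arrows
`(agent, source outcome, source condition, target outcome, target condition)`,
with outcomes drawn from `ℕ`; `upd U o φ` is `[U,o]φ` and `all φ` is `[↑]φ`. -/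
inductive Form (P A : Type) : Type where
  | atom : P → Form P A
  | neg  : Form P A → Form P A
  | and  : Form P A → Form P A → Form P A
  | box  : A → Form P A → Form P A
  | upd  : List (A × ℕ × Form P A × ℕ × Form P A) → ℕ → Form P A → Form P A
  | all  : Form P A → Form P A

/-- An arrow: agent, source outcome, source condition, target outcome, target condition. -/
abbrev Arrow (P A : Type) := A × ℕ × Form P A × ℕ × Form P A

/-- Formulas of basic multi-agent modal logic: no update modality, no quantifier. -/
inductive Form.Modal {P A : Type} : Form P A → Prop
  | atom (p : P) : Form.Modal (.atom p)
  | neg {φ : Form P A} : Form.Modal φ → Form.Modal (.neg φ)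
  | and {φ ψ : Form P A} : Form.Modal φ → Form.Modal ψ → Form.Modal (.and φ ψ)
  | box (a : A) {φ : Form P A} : Form.Modal φ → Form.Modal (.box a φ)

/-- Formulas of arrow update model logic (no arbitrary-update quantifier anywhere,
including inside the conditions of arrow update models). -/
inductive Form.NoQuant {P A : Type} : Form P A → Prop
  | atom (p : P) : Form.NoQuant (.atom p)
  | neg {φ : Form P A} : Form.NoQuant φ → Form.NoQuant (.neg φ)
  | and {φ ψ : Form P A} : Form.NoQuant φ → Form.NoQuant ψ → Form.NoQuant (.and φ ψ)
  | box (a : A) {φ : Form P A} : Form.NoQuant φ → Form.NoQuant (.box a φ)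
  | upd {U : List (Arrow P A)} (o : ℕ) {φ : Form P A} : Form.NoQuant φ →
      (∀ ar ∈ U, Form.NoQuant ar.2.2.1) → (∀ ar ∈ U, Form.NoQuant ar.2.2.2.2) →
      Form.NoQuant (.upd U o φ)

/-- Propositional formulas (no modalities at all). -/
inductive Form.Prp {P A : Type} : Form P A → Prop
  | atom (p : P) : Form.Prp (.atom p)
  | neg {φ : Form P A} : Form.Prp φ → Form.Prp (.neg φ)
  | and {φ ψ : Form P A} : Form.Prp φ → Form.Prp ψ → Form.Prp (.and φ ψ)

/-- A relational (Kripke) model. -/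
structure KModel (P A : Type) : Type 1 where
  World : Type
  R : A → World → World → Prop
  V : World → P → Prop

variable {P A : Type}

/-- Satisfaction for basic modal formulas (junk value `False` on updates/quantifiers;
only used on modal formulas). -/
def msat (M : KModel P A) : M.World → Form P A → Prop
  | s, .atom p => M.V s p
  | s, .neg φ => ¬ msat M s φ
  | s, .and φ ψ => msat M s φ ∧ msat M s ψ
  | s, .box a φ => ∀ t, M.R a s t → msat M t φ
  | _, .upd _ _ _ => False
  | _, .all _ => False

/-- Some arrow of `U` for agent `a` from outcome `o` to outcome `o'` has its (modal)
source condition true at `s` and its target condition true at `s'`. -/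
def marrowOK (M : KModel P A) (U : List (Arrow P A)) (a : A) (o o' : ℕ)
    (s s' : M.World) : Prop :=
  ∃ ψ ψ', (a, o, ψ, o', ψ') ∈ U ∧ msat M s ψ ∧ msat M s' ψ'

/-- All source and target conditions of `U` are basic modal formulas. -/
def ModalArrows (U : List (Arrow P A)) : Prop :=
  ∀ ar ∈ U, Form.Modal ar.2.2.1 ∧ Form.Modal ar.2.2.2.2

mutual
  /-- Satisfaction `M,s ⊨ φ`.  The case `upd U o φ` is interpreted in the product
  model `M*U` (inlined); `all φ` quantifies over all arrow update models with basic
  modal source and target conditions. -/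
  def Form.sat : (M : KModel P A) → M.World → Form P A → Prop
    | M, s, .atom p => M.V s p
    | M, s, .neg φ => ¬ Form.sat M s φ
    | M, s, .and φ ψ => Form.sat M s φ ∧ Form.sat M s ψ
    | M, s, .box a φ => ∀ t, M.R a s t → Form.sat M t φ
    | M, s, .upd U o φ =>
        Form.sat ⟨M.World × ℕ,
          fun a x y => M.R a x.1 y.1 ∧ satList M U a x.2 y.2 x.1 y.1,
          fun x p => M.V x.1 p⟩ (s, o) φ
    | M, s, .all φ => ∀ (U : List (Arrow P A)) (o : ℕ), ModalArrows U →
        Form.sat ⟨M.World × ℕ,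
          fun a x y => M.R a x.1 y.1 ∧ marrowOK M U a x.2 y.2 x.1 y.1,
          fun x p => M.V x.1 p⟩ (s, o) φ
  termination_by M s φ => sizeOf φ

  /-- Some arrow of the list, for agent `a`, from `o` to `o'`, has its source condition
  true at `s` and its target condition true at `s'`. -/
  def satList : (M : KModel P A) → List (Arrow P A) → A → ℕ → ℕ → M.World → M.World → Prop
    | _, [], _, _, _, _, _ => False
    | M, (b, o1, ψ, o2, ψ') :: rest, a, o, o', s, s' =>
        (b = a ∧ o1 = o ∧ o2 = o' ∧ Form.sat M s ψ ∧ Form.sat M s' ψ') ∨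
        satList M rest a o o' s s'
  termination_by M U a o o' s s' => sizeOf U
end

/-- The product `M*U` of a relational model and an arrow update model. -/
def prodModel (M : KModel P A) (U : List (Arrow P A)) : KModel P A :=
  ⟨M.World × ℕ,
   fun a x y => M.R a x.1 y.1 ∧ satList M U a x.2 y.2 x.1 y.1,
   fun x p => M.V x.1 p⟩

def Valid (φ : Form P A) : Prop := ∀ (M : KModel P A) (s : M.World), Form.sat M s φ

def Form.or (φ ψ : Form P A) : Form P A := .neg (.and (.neg φ) (.neg ψ))
def Form.imp (φ ψ : Form P A) : Form P A := .neg (.and φ (.neg ψ))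
def Form.dia (a : A) (φ : Form P A) : Form P A := .neg (.box a (.neg φ))
/-- `⟨U,o⟩φ` -/
def Form.diaUpd (U : List (Arrow P A)) (o : ℕ) (φ : Form P A) : Form P A :=
  .neg (.upd U o (.neg φ))
/-- `⟨↑⟩φ` -/
def Form.ex (φ : Form P A) : Form P A := .neg (.all (.neg φ))
/-- A canonical tautology. -/
def Form.top [Inhabited P] : Form P A := .neg (.and (.atom default) (.neg (.atom default)))
/-- Finite conjunction. -/
def Form.conj [Inhabited P] : List (Form P A) → Form P A
  | [] => Form.top
  | φ :: rest => .and φ (Form.conj rest)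

/-- `Z` is a bisimulation between `M` and `N`. -/
def IsBisim (M N : KModel P A) (Z : M.World → N.World → Prop) : Prop :=
  ∀ s s', Z s s' →
    (∀ p, M.V s p ↔ N.V s' p) ∧
    (∀ a t, M.R a s t → ∃ t', N.R a s' t' ∧ Z t t') ∧
    (∀ a t', N.R a s' t' → ∃ t, M.R a s t ∧ Z t t')

/-- Bisimilarity of pointed models. -/
def Bisimilar (M : KModel P A) (s : M.World) (N : KModel P A) (s' : N.World) : Prop :=
  ∃ Z, IsBisim M N Z ∧ Z s s'

/-- An action model: actions with accessibility relations and preconditions. -/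
structure AModel (P A : Type) : Type 1 where
  Action : Type
  rel : A → Action → Action → Prop
  pre : Action → Form P A

/-- The restricted modal product `M ⊗ E`. -/
def actProd (M : KModel P A) (E : AModel P A) : KModel P A :=
  ⟨{x : M.World × E.Action // Form.sat M x.1 (E.pre x.2)},
   fun a x y => M.R a x.1.1 y.1.1 ∧ E.rel a x.1.2 y.1.2,
   fun x p => M.V x.1.1 p⟩

/-- `M,s ⊨ [E,e]φ`: if the precondition of `e` holds at `s` then `φ` holds at `(s,e)`
in `M ⊗ E`. -/
def actSat (M : KModel P A) (E : AModel P A) (s : M.World) (e : E.Action)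
    (φ : Form P A) : Prop :=
  ∀ h : Form.sat M s (E.pre e), Form.sat (actProd M E) ⟨(s, e), h⟩ φ


/-- An arrow update model presented relationally (outcomes form an arbitrary type,
and `arr a o o' ψ ψ'` holds iff there is an `a`-arrow from `o` to `o'` with source
condition `ψ` and target condition `ψ'`). -/
structure RAUM (P A : Type) : Type 1 where
  Outcome : Type
  arr : A → Outcome → Outcome → Form P A → Form P A → Prop

/-- The product `M * U` for a relationally presented arrow update model. -/
def raumProd (M : KModel P A) (U : RAUM P A) : KModel P A :=
  ⟨M.World × U.Outcome,
   fun a x y => M.R a x.1 y.1 ∧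
     ∃ ψ ψ', U.arr a x.2 y.2 ψ ψ' ∧ Form.sat M x.1 ψ ∧ Form.sat M y.1 ψ',
   fun x p => M.V x.1 p⟩

/-- The arrow update model `U(E)` of an action model `E`: same domain, and an
`a`-arrow from `e` to `e'` with source condition `pre(e)` and target condition
`pre(e')` whenever `(e,e') ∈ →_a`. -/
def UofE (E : AModel P A) : RAUM P A :=
  ⟨E.Action, fun a e e' ψ ψ' => E.rel a e e' ∧ ψ = E.pre e ∧ ψ' = E.pre e'⟩

/-- A bounded morphism from `M` to `N`. -/
def BMorph (M N : KModel P A) (f : M.World → N.World) : Prop :=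
  (∀ s p, M.V s p ↔ N.V (f s) p) ∧
  (∀ a s t, M.R a s t → N.R a (f s) (f t)) ∧
  (∀ a s t', N.R a (f s) t' → ∃ t, M.R a s t ∧ f t = t')

theorem sizeOf_cond_lt {ar : Arrow P A} {U : List (Arrow P A)} (hm : ar ∈ U)
    (o : ℕ) (φ : Form P A) :
    sizeOf ar.2.2.1 < sizeOf (Form.upd U o φ) ∧
      sizeOf ar.2.2.2.2 < sizeOf (Form.upd U o φ) := by
  have h1 : sizeOf ar < sizeOf U := List.sizeOf_lt_of_mem hm
  obtain ⟨b, o1, ψ, o2, ψ'⟩ := ar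
  simp only [Prod.mk.sizeOf_spec] at h1
  simp only [Form.upd.sizeOf_spec]
  omega

theorem satList_iff {M N : KModel P A} {s s' : M.World} {t t' : N.World}
    (U : List (Arrow P A))
    (h : ∀ ar ∈ U, (Form.sat M s ar.2.2.1 ↔ Form.sat N t ar.2.2.1) ∧
        (Form.sat M s' ar.2.2.2.2 ↔ Form.sat N t' ar.2.2.2.2)) :
    ∀ a o o', satList M U a o o' s s' ↔ satList N U a o o' t t' := by
  induction U with
  | nil => intro a o o'; simp [satList]
  | cons ar rest ih =>
    obtain ⟨b, o1, ψ, o2, ψ'⟩ := ar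
    intro a o o'
    have h1 := h (b, o1, ψ, o2, ψ') (by simp)
    simp only at h1
    simp only [satList]
    rw [h1.1, h1.2, ih (fun ar hm => h ar (List.mem_cons_of_mem _ hm)) a o o']

theorem msat_bmorph {M N : KModel P A} {f : M.World → N.World} (h : BMorph M N f) :
    ∀ {φ : Form P A}, Form.Modal φ → ∀ s, msat M s φ ↔ msat N (f s) φ := by
  intro φ hm
  induction hm with
  | atom p => intro s; exact h.1 s p
  | neg _ ih => intro s; simp only [msat]; rw [ih s]
  | and _ _ ih1 ih2 => intro s; simp only [msat]; rw [ih1 s, ih2 s]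
  | box a _ ih =>
    intro s
    simp only [msat]
    constructor
    · intro hb t' hR
      obtain ⟨t, hMt, hft⟩ := h.2.2 a s t' hR
      rw [← hft, ← ih t]; exact hb t hMt
    · intro hb t hR; rw [ih t]; exact hb (f t) (h.2.1 a s t hR)

theorem marrowOK_iff {M N : KModel P A} {f : M.World → N.World} (h : BMorph M N f)
    {U : List (Arrow P A)} (hU : ModalArrows U) (a : A) (o o' : ℕ) (s s' : M.World) :
    marrowOK M U a o o' s s' ↔ marrowOK N U a o o' (f s) (f s') := by
  constructor
  · rintro ⟨ψ, ψ', hm, h1, h2⟩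
    exact ⟨ψ, ψ', hm, (msat_bmorph h (hU _ hm).1 s).mp h1,
      (msat_bmorph h (hU _ hm).2 s').mp h2⟩
  · rintro ⟨ψ, ψ', hm, h1, h2⟩
    exact ⟨ψ, ψ', hm, (msat_bmorph h (hU _ hm).1 s).mpr h1,
      (msat_bmorph h (hU _ hm).2 s').mpr h2⟩

theorem sat_bmorph : ∀ (φ : Form P A) (M N : KModel P A) (f : M.World → N.World),
    BMorph M N f → ∀ s, Form.sat M s φ ↔ Form.sat N (f s) φ
  | .atom p, M, N, f, h, s => by simpa only [Form.sat] using h.1 s p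
  | .neg φ, M, N, f, h, s => by
      simp only [Form.sat]; rw [sat_bmorph φ M N f h s]
  | .and φ ψ, M, N, f, h, s => by
      simp only [Form.sat]; rw [sat_bmorph φ M N f h s, sat_bmorph ψ M N f h s]
  | .box a φ, M, N, f, h, s => by
      simp only [Form.sat]
      constructor
      · intro hb t' hR
        obtain ⟨t, hMt, hft⟩ := h.2.2 a s t' hR
        rw [← hft, ← sat_bmorph φ M N f h t]; exact hb t hMt
      · intro hb t hR
        rw [sat_bmorph φ M N f h t]; exact hb (f t) (h.2.1 a s t hR)
  | .upd U o φ, M, N, f, h, s => by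
      have hIH : ∀ ar ∈ U, ∀ w : M.World,
          (Form.sat M w ar.2.2.1 ↔ Form.sat N (f w) ar.2.2.1) ∧
          (Form.sat M w ar.2.2.2.2 ↔ Form.sat N (f w) ar.2.2.2.2) :=
        fun ar hm w =>
          ⟨sat_bmorph ar.2.2.1 M N f h w, sat_bmorph ar.2.2.2.2 M N f h w⟩
      have hbm : BMorph (prodModel M U) (prodModel N U) (fun x => (f x.1, x.2)) := by
        refine ⟨fun x p => h.1 x.1 p, ?_, ?_⟩
        · intro a x y hr
          exact ⟨h.2.1 a x.1 y.1 hr.1,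
            (satList_iff U (fun ar hm =>
              ⟨(hIH ar hm x.1).1, (hIH ar hm y.1).2⟩) a x.2 y.2).mp hr.2⟩
        · intro a x t' hr
          obtain ⟨t, hMt, hft⟩ := h.2.2 a x.1 t'.1 hr.1
          refine ⟨(t, t'.2), ⟨hMt, ?_⟩, by simp [hft]; rfl⟩
          refine (satList_iff U (fun ar hm =>
            ⟨(hIH ar hm x.1).1, (hIH ar hm t).2⟩) a x.2 t'.2).mpr ?_
          rw [hft]; exact hr.2
      simp only [Form.sat]
      exact sat_bmorph φ (prodModel M U) (prodModel N U) (fun x => (f x.1, x.2)) hbm (s, o)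
  | .all φ, M, N, f, h, s => by
      simp only [Form.sat]
      refine forall_congr' fun U => forall_congr' fun o => imp_congr_right fun hU => ?_
      have hbm : BMorph
          ⟨M.World × ℕ, fun a x y => M.R a x.1 y.1 ∧ marrowOK M U a x.2 y.2 x.1 y.1,
            fun x p => M.V x.1 p⟩
          ⟨N.World × ℕ, fun a x y => N.R a x.1 y.1 ∧ marrowOK N U a x.2 y.2 x.1 y.1,
            fun x p => N.V x.1 p⟩
          (fun x => (f x.1, x.2)) := by
        refine ⟨fun x p => h.1 x.1 p, ?_, ?_⟩
        · intro a x y hr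
          exact ⟨h.2.1 a x.1 y.1 hr.1,
            (marrowOK_iff h hU a x.2 y.2 x.1 y.1).mp hr.2⟩
        · intro a x t' hr
          obtain ⟨t, hMt, hft⟩ := h.2.2 a x.1 t'.1 hr.1
          refine ⟨(t, t'.2), ⟨hMt, ?_⟩, by simp [hft]⟩
          refine (marrowOK_iff h hU a x.2 t'.2 x.1 t).mpr ?_
          rw [hft]; exact hr.2
      exact sat_bmorph φ
        ⟨M.World × ℕ, fun a x y => M.R a x.1 y.1 ∧ marrowOK M U a x.2 y.2 x.1 y.1,
          fun x p => M.V x.1 p⟩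
        ⟨N.World × ℕ, fun a x y => N.R a x.1 y.1 ∧ marrowOK N U a x.2 y.2 x.1 y.1,
          fun x p => N.V x.1 p⟩
        (fun x => (f x.1, x.2)) hbm (s, o)
  termination_by φ => sizeOf φ
  decreasing_by
    all_goals simp_wf
    all_goals first
      | omega
      | (have := sizeOf_cond_lt hm o φ
         simp only [Form.upd.sizeOf_spec, sizeOf_nat] at this
         omega)

theorem bmorph_bisim {M N : KModel P A} {f : M.World → N.World} (h : BMorph M N f) :
    IsBisim M N (fun x y => f x = y) := by
  rintro s s' rfl
  refine ⟨h.1 s, ?_, ?_⟩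
  · intro a t ht; exact ⟨f t, h.2.1 a s t ht, rfl⟩
  · intro a t' ht'
    obtain ⟨t, hMt, hft⟩ := h.2.2 a s t' ht'
    exact ⟨t, hMt, hft⟩

theorem act_bmorph (E : AModel P A) (M : KModel P A) :
    BMorph (actProd M E) (raumProd M (UofE E)) (fun x => x.1) := by
  refine ⟨fun s p => Iff.rfl, ?_, ?_⟩
  · rintro a x y ⟨h1, h2⟩
    exact ⟨h1, E.pre x.1.2, E.pre y.1.2, ⟨h2, rfl, rfl⟩, x.2, y.2⟩
  · rintro a x t' ⟨h1, ψ, ψ', ⟨hrel, rfl, rfl⟩, hs, ht⟩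
    exact ⟨⟨t', ht⟩, ⟨h1, hrel⟩, rfl⟩

/-- for every pointed model `(M,s)` with `M,s ⊨ pre(e)`, the updated
models `(M⊗E,(s,e))` and `(M*U(E),(s,e))` are bisimilar; hence
`⊨ [E,e]φ ↔ (pre(e) → [U(E),e]φ)`. -/
theorem action_to_arrow (P A : Type) (E : AModel P A) (e : E.Action) :
    (∀ (M : KModel P A) (s : M.World) (h : Form.sat M s (E.pre e)),
      Bisimilar (actProd M E) ⟨(s, e), h⟩ (raumProd M (UofE E)) (s, e)) ∧
    (∀ (φ : Form P A) (M : KModel P A) (s : M.World),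
      actSat M E s e φ ↔
        (Form.sat M s (E.pre e) → Form.sat (raumProd M (UofE E)) (s, e) φ)) := by
  constructor
  · intro M s h
    exact ⟨fun x y => x.1 = y, bmorph_bisim (act_bmorph E M), rfl⟩
  · intro φ M s
    unfold actSat
    constructor
    · intro hall hpre
      exact (sat_bmorph φ (actProd M E) (raumProd M (UofE E)) (fun x => x.1)
        (act_bmorph E M) ⟨(s, e), hpre⟩).mp (hall hpre)
    · intro himp hpre
      exact (sat_bmorph φ (actProd M E) (raumProd M (UofE E)) (fun x => x.1)
        (act_bmorph E M) ⟨(s, e), hpre⟩).mpr (himp hpre)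

end AAUML
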